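/- Let f : ℝⁿ → ℝ be locally Lipschitz and let D be a full-measure set of differentiability points of f. For 0 ≤ ε₁ < ε₂ and any x ∈ ℝⁿ, the Clarke ε₁-subdifferential ∂̄_{ε₁} f(x) is contained in G_{ε₂}(x) := cl conv ∇f(B(x, ε₂) ∩ D). -/

import Mathlib

open Filter MeasureTheory Set Topology

lemma ae_ae_line {n : ℕ} {S : Set (EuclideanSpace ℝ (Fin n))} (hS : MeasurableSet S)
    (h0 : volume S = 0) (w : EuclideanSpace ℝ (Fin n)) :
    ∀ᵐ q : EuclideanSpace ℝ (Fin n), ∀ᵐ t : ℝ, q + t • w ∉ S := by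
  set A : Set (EuclideanSpace ℝ (Fin n) × ℝ) := {z | z.1 + z.2 • w ∈ S} with hA
  have hmc : Continuous fun z : EuclideanSpace ℝ (Fin n) × ℝ => z.1 + z.2 • w :=
    continuous_fst.add (continuous_snd.smul continuous_const)
  have hAm : MeasurableSet A := hmc.measurable hS
  have hzero : (volume.prod (volume : Measure ℝ)) A = 0 := by
    rw [Measure.prod_apply_symm hAm]
    have hsec : ∀ t : ℝ, volume ((fun q : EuclideanSpace ℝ (Fin n) => (q, t)) ⁻¹' A) = 0 := by
      intro t
      have he : ((fun q : EuclideanSpace ℝ (Fin n) => (q, t)) ⁻¹' A)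
          = (fun q : EuclideanSpace ℝ (Fin n) => q + t • w) ⁻¹' S := rfl
      rw [he, measure_preimage_add_right]
      exact h0
    simp [hsec]
  have := (Measure.measure_prod_null hAm).1 hzero
  filter_upwards [this] with q hq
  have hq' : volume {t : ℝ | q + t • w ∈ S} = 0 := hq
  exact ae_iff.2 (by simpa using hq')

lemma oneD' {g : ℝ → ℝ} {K : NNReal} {c T : ℝ} (hT : 0 < T)
    (hg : LipschitzWith K g)
    (hd : ∀ᵐ t ∂(volume : Measure ℝ), t ∈ Set.Ioo 0 T → ∃ d ≤ c, HasDerivAt g d t) :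
    g T - g 0 ≤ c * T := by
  set μ : Measure ℝ := volume.restrict (Ioc 0 T) with hμ
  have hgc : Continuous g := hg.continuous
  have hgi : ∀ a b : ℝ, IntervalIntegrable g volume a b := fun a b => hgc.intervalIntegrable a b
  set u : ℕ → ℝ := fun k => ((k : ℝ) + 1)⁻¹ with hu
  have hupos : ∀ k, 0 < u k := fun k => by positivity
  have hu0 : Tendsto u atTop (𝓝 0) := tendsto_one_div_add_atTop_nhds_zero_nat.congr (by
    intro k; simp [hu, one_div])
  -- a.e. property on μ
  have hae : ∀ᵐ t ∂μ, DifferentiableAt ℝ g t ∧ deriv g t ≤ c := by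
    have h1 : ∀ᵐ t ∂μ, t ∈ Ioo 0 T := by
      have : ∀ᵐ t ∂μ, t ∈ Ioc 0 T := ae_restrict_mem measurableSet_Ioc
      have h2 : ∀ᵐ t ∂μ, t ≠ T := by
        refine ae_restrict_of_ae ?_
        exact ae_iff.2 (by simp [measure_singleton])
      filter_upwards [this, h2] with t ht hne
      exact ⟨ht.1, lt_of_le_of_ne ht.2 hne⟩
    filter_upwards [h1, ae_restrict_of_ae hd] with t ht hdt
    obtain ⟨d, hdc, hder⟩ := hdt ht
    exact ⟨hder.differentiableAt, by rwa [hder.deriv]⟩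
  haveI : IsFiniteMeasure μ := by
    constructor
    rw [hμ, Measure.restrict_apply_univ, Real.volume_Ioc]
    exact ENNReal.ofReal_lt_top
  set F : ℕ → ℝ → ℝ := fun k t => (g (t + u k) - g t) / u k with hF
  -- derivative is bounded by K
  have hderbd : ∀ t : ℝ, ‖deriv g t‖ ≤ (K : ℝ) := by
    intro t
    by_cases hdt : DifferentiableAt ℝ g t
    · have h1 : deriv g t = fderiv ℝ g t 1 := by
        rw [← derivWithin_univ, ← fderivWithin_univ]; rfl
      rw [h1]
      calc ‖fderiv ℝ g t 1‖ ≤ ‖fderiv ℝ g t‖ * ‖(1:ℝ)‖ := (fderiv ℝ g t).le_opNorm 1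
        _ ≤ (K : ℝ) * 1 := by
            gcongr
            · exact norm_fderiv_le_of_lipschitz ℝ hg
            · simp
        _ = (K : ℝ) := mul_one _
    · simp [deriv_zero_of_not_differentiableAt hdt]
  have hint : Integrable (deriv g) μ := by
    refine ⟨(measurable_deriv g).aestronglyMeasurable, ?_⟩
    exact HasFiniteIntegral.of_bounded (C := (K : ℝ)) (ae_of_all _ hderbd)
  -- dominated convergence
  have hDCT : Tendsto (fun k => ∫ t, F k t ∂μ) atTop (𝓝 (∫ t, deriv g t ∂μ)) := by
    refine tendsto_integral_of_dominated_convergence (fun _ => (K : ℝ)) ?_ ?_ ?_ ?_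
    · intro k
      exact ((hgc.comp (continuous_id.add continuous_const)).sub hgc).div_const
        (u k) |>.aestronglyMeasurable
    · exact integrable_const _
    · intro k
      refine ae_of_all _ fun t => ?_
      rw [hF]
      have := hg.dist_le_mul (t + u k) t
      rw [Real.dist_eq, Real.dist_eq] at this
      simp only [add_sub_cancel_left] at this
      rw [Real.norm_eq_abs, abs_div, abs_of_pos (hupos k)]
      rw [div_le_iff₀ (hupos k)]
      calc |g (t + u k) - g t| ≤ (K:ℝ) * |u k| := this
        _ = (K:ℝ) * u k := by rw [abs_of_pos (hupos k)]
    · filter_upwards [hae] with t ht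
      have hslope := hasDerivAt_iff_tendsto_slope.1 ht.1.hasDerivAt
      have hseq : Tendsto (fun k => t + u k) atTop (𝓝[≠] t) := by
        rw [tendsto_nhdsWithin_iff]
        constructor
        · simpa using tendsto_const_nhds.add hu0
        · exact Eventually.of_forall fun k => by
            simp only [mem_compl_iff, mem_singleton_iff]
            intro h
            exact (hupos k).ne' (by linarith [congrArg (· - t) h])
      have := hslope.comp hseq
      refine this.congr fun k => ?_
      simp only [Function.comp_apply]
      rw [slope_def_field]
      simp [hF]
  -- compute the integral of F k
  have hcalc : ∀ k, ∫ t, F k t ∂μ =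
      ((∫ s in T..(T + u k), g s) - ∫ s in (0:ℝ)..(u k), g s) / u k := by
    intro k
    have h1 : ∫ t, F k t ∂μ = ∫ t in (0:ℝ)..T, F k t := by
      rw [intervalIntegral.integral_of_le hT.le]
    rw [h1, hF]
    rw [intervalIntegral.integral_div]
    congr 1
    have hgi2 : IntervalIntegrable (fun t => g (t + u k)) volume 0 T :=
      Continuous.intervalIntegrable (by continuity) _ _
    rw [intervalIntegral.integral_sub hgi2 (hgc.intervalIntegrable _ _)]
    have h2 : (∫ t in (0:ℝ)..T, g (t + u k)) = ∫ s in (0 + u k)..(T + u k), g s :=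
      intervalIntegral.integral_comp_add_right g (u k)
    have h3 : (∫ s in (u k)..T, g s) + ∫ s in T..(T + u k), g s
        = ∫ s in (u k)..(T + u k), g s :=
      intervalIntegral.integral_add_adjacent_intervals (hgi _ _) (hgi _ _)
    have h4 : (∫ s in (0:ℝ)..(u k), g s) + ∫ s in (u k)..T, g s = ∫ s in (0:ℝ)..T, g s :=
      intervalIntegral.integral_add_adjacent_intervals (hgi _ _) (hgi _ _)
    rw [h2]
    rw [zero_add] at h2 ⊢
    linarith
  -- the other limit: A_k → g T - g 0
  have hlim2 : Tendsto (fun k => ∫ t, F k t ∂μ) atTop (𝓝 (g T - g 0)) := by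
    have hT' : ∀ b : ℝ, HasDerivAt (fun x => ∫ s in b..x, g s) (g b) b := fun b =>
      intervalIntegral.integral_hasDerivAt_right (hgi _ _)
        (hgc.stronglyMeasurableAtFilter _ _) hgc.continuousAt
    have key : ∀ b : ℝ, Tendsto (fun k => (∫ s in b..(b + u k), g s) / u k) atTop (𝓝 (g b)) := by
      intro b
      have hslope := hasDerivAt_iff_tendsto_slope.1 (hT' b)
      have hseq : Tendsto (fun k => b + u k) atTop (𝓝[≠] b) := by
        rw [tendsto_nhdsWithin_iff]
        refine ⟨by simpa using tendsto_const_nhds.add hu0, Eventually.of_forall fun k => ?_⟩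
        simp only [mem_compl_iff, mem_singleton_iff]
        intro h
        exact (hupos k).ne' (by linarith [congrArg (· - b) h])
      have := hslope.comp hseq
      refine this.congr fun k => ?_
      simp only [Function.comp_apply]
      rw [slope_def_field, intervalIntegral.integral_same, add_sub_cancel_left, sub_zero]
    have := (key T).sub (key 0)
    simp only [zero_add] at this
    refine this.congr fun k => ?_
    rw [hcalc k, sub_div]
  have heq : ∫ t, deriv g t ∂μ = g T - g 0 := tendsto_nhds_unique hDCT hlim2
  -- conclude
  have hmono : ∫ t, deriv g t ∂μ ≤ ∫ _t, c ∂μ := by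
    refine integral_mono_ae hint (integrable_const _) ?_
    filter_upwards [hae] with t ht using ht.2
  have hconst : ∫ _t, c ∂μ = c * T := by
    rw [integral_const]
    simp [hμ, Real.volume_Ioc, ENNReal.toReal_ofReal hT.le, mul_comm, hT.le]
  rw [← heq, ← hconst]
  exact hmono

lemma gradMem {n : ℕ} {f : EuclideanSpace ℝ (Fin n) → ℝ}
    (hf : LocallyLipschitz f) {D : Set (EuclideanSpace ℝ (Fin n))} (hD : volume Dᶜ = 0)
    (hdiff : ∀ y ∈ D, DifferentiableAt ℝ f y) {p : EuclideanSpace ℝ (Fin n)} {δ : ℝ}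
    (hδ : 0 < δ) (hp : DifferentiableAt ℝ f p) :
    gradient f p ∈ closure (convexHull ℝ (gradient f '' (Metric.closedBall p δ ∩ D))) := by
  by_contra hmem
  obtain ⟨K, U, hU, hfU⟩ := hf p
  obtain ⟨δ₀, hδ₀, hballU⟩ := Metric.nhds_basis_closedBall.mem_iff.1 hU
  set δ' : ℝ := min δ δ₀ with hδ'def
  have hδ' : 0 < δ' := lt_min hδ hδ₀
  have hsubδ : Metric.closedBall p δ' ⊆ Metric.closedBall p δ :=
    Metric.closedBall_subset_closedBall (min_le_left _ _)
  have hlip : LipschitzOnWith K f (Metric.closedBall p δ') :=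
    hfU.mono ((Metric.closedBall_subset_closedBall (min_le_right _ _)).trans hballU)
  obtain ⟨ψ, c, hlt, hgt⟩ := geometric_hahn_banach_closed_point
    ((convex_convexHull ℝ _).closure) isClosed_closure hmem
  set w : EuclideanSpace ℝ (Fin n) := (InnerProductSpace.toDual ℝ _).symm ψ with hwdef
  -- derivative along the line
  have lineDeriv : ∀ (q : EuclideanSpace ℝ (Fin n)) (t₀ : ℝ),
      DifferentiableAt ℝ f (q + t₀ • w) →
      HasDerivAt (fun t : ℝ => f (q + t • w)) (ψ (gradient f (q + t₀ • w))) t₀ := by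
    intro q t₀ hz
    have hline : HasDerivAt (fun t : ℝ => q + t • w) w t₀ := by
      have h1 : HasDerivAt (fun t : ℝ => t • w) ((1:ℝ) • w) t₀ := (hasDerivAt_id t₀).smul_const w
      simpa using h1.const_add q
    have hcomp := hz.hasFDerivAt.comp_hasDerivAt t₀ hline
    have hval : (fderiv ℝ f (q + t₀ • w)) w = ψ (gradient f (q + t₀ • w)) := by
      have h1 : ψ (gradient f (q + t₀ • w))
          = (inner ℝ w (gradient f (q + t₀ • w)) : ℝ) := by
        rw [hwdef, InnerProductSpace.toDual_symm_apply]
      rw [h1, real_inner_comm]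
      exact (InnerProductSpace.toDual_symm_apply (y := fderiv ℝ f (q + t₀ • w)) (x := w)).symm
    rw [← hval]
    exact hcomp
  -- strict inequalities
  have hlt' : ∀ z ∈ Metric.closedBall p δ' ∩ D, ψ (gradient f z) < c := by
    intro z hz
    exact hlt _ (subset_closure (subset_convexHull ℝ _ ⟨z, ⟨hsubδ hz.1, hz.2⟩, rfl⟩))
  -- null superset
  obtain ⟨S, hDS, hSm, hS0⟩ := exists_measurable_superset_of_null hD
  have hgood := ae_ae_line hSm hS0 w
  set r : ℝ := δ' / 2 with hrdef
  have hr : 0 < r := by positivity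
  set T : ℝ := δ' / (2 * (‖w‖ + 1)) with hTdef
  have hT : 0 < T := by positivity
  have hgeom : ∀ q ∈ Metric.closedBall p r, ∀ t ∈ Icc (0:ℝ) T,
      q + t • w ∈ Metric.closedBall p δ' := by
    intro q hq t ht
    rw [Metric.mem_closedBall] at hq ⊢
    have h1 : dist (q + t • w) q = ‖t • w‖ := by
      rw [dist_eq_norm]; congr 1; abel
    have h2 : ‖t • w‖ ≤ T * ‖w‖ := by
      rw [norm_smul, Real.norm_eq_abs, abs_of_nonneg ht.1]
      exact mul_le_mul_of_nonneg_right ht.2 (norm_nonneg w)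
    have h3 : T * ‖w‖ ≤ δ' / 2 := by
      rw [hTdef]
      rw [div_mul_eq_mul_div, div_le_div_iff₀ (by positivity) (by norm_num)]
      nlinarith [norm_nonneg w, hδ'.le]
    calc dist (q + t • w) p ≤ dist (q + t • w) q + dist q p := dist_triangle _ _ _
      _ ≤ δ' / 2 + δ' / 2 := by
          have := h1 ▸ (h2.trans h3)
          have hq2 : dist q p ≤ δ' / 2 := hq
          linarith
      _ = δ' := by ring
  -- good points satisfy the increment bound
  have hq_ineq : ∀ q ∈ Metric.closedBall p r, (∀ᵐ t : ℝ, q + t • w ∉ S) →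
      ∀ t ∈ Ioc (0:ℝ) T, f (q + t • w) - f q ≤ c * t := by
    intro q hq hqa t ht
    have hmaps : MapsTo (fun s : ℝ => q + s • w) (Icc 0 T) (Metric.closedBall p δ') :=
      fun s hs => hgeom q hq s hs
    have hinner : LipschitzWith ‖w‖₊ (fun s : ℝ => q + s • w) := by
      apply LipschitzWith.of_dist_le_mul
      intro a b
      rw [dist_eq_norm]
      have he : q + a • w - (q + b • w) = (a - b) • w := by
        rw [sub_smul]; abel
      rw [he, norm_smul, Real.dist_eq, mul_comm]
      simp [Real.norm_eq_abs]
    have hlips : LipschitzOnWith (K * ‖w‖₊) (fun s : ℝ => f (q + s • w)) (Icc 0 T) :=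
      hlip.comp hinner.lipschitzOnWith hmaps
    obtain ⟨G, hGlip, hGeq⟩ := hlips.extend_real
    have haet : ∀ᵐ s ∂(volume : Measure ℝ), s ∈ Set.Ioo 0 t → ∃ d ≤ c, HasDerivAt G d s := by
      filter_upwards [hqa] with s hs hmemIoo
      have hsT : s ∈ Ioo 0 T := ⟨hmemIoo.1, lt_of_lt_of_le hmemIoo.2 ht.2⟩
      have hzD : q + s • w ∈ D := by
        by_contra h
        exact hs (hDS h)
      have hzB : q + s • w ∈ Metric.closedBall p δ' := hgeom q hq s ⟨hsT.1.le, hsT.2.le⟩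
      have hG : HasDerivAt G (ψ (gradient f (q + s • w))) s := by
        refine (lineDeriv q s (hdiff _ hzD)).congr_of_eventuallyEq ?_
        filter_upwards [isOpen_Ioo.mem_nhds hsT] with y hy
        exact (hGeq ⟨hy.1.le, hy.2.le⟩).symm
      exact ⟨_, (hlt' _ ⟨hzB, hzD⟩).le, hG⟩
    have h1d := oneD' ht.1 hGlip haet
    have hG0 : G 0 = f q := by
      have := (hGeq (show (0:ℝ) ∈ Icc 0 T from ⟨le_refl _, hT.le⟩)).symm
      simpa using this
    have hGt : G t = f (q + t • w) :=
      ((hGeq (show t ∈ Icc 0 T from ⟨ht.1.le, ht.2⟩))).symm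
    rw [hG0, hGt] at h1d
    linarith [h1d]
  -- choose good points approaching p
  have hgoodball : ∀ ρ : ℝ, 0 < ρ → ∃ q, q ∈ Metric.ball p ρ ∧ (∀ᵐ t : ℝ, q + t • w ∉ S) := by
    intro ρ hρ
    by_contra hno
    push_neg at hno
    have hsub2 : Metric.ball p ρ ⊆ {q : EuclideanSpace ℝ (Fin n) | ¬ ∀ᵐ t : ℝ, q + t • w ∉ S} :=
      fun q hq h => hno q hq h
    have h0 : volume {q : EuclideanSpace ℝ (Fin n) | ¬ ∀ᵐ t : ℝ, q + t • w ∉ S} = 0 :=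
      ae_iff.1 hgood
    have h1 := measure_mono hsub2 (μ := (volume : Measure (EuclideanSpace ℝ (Fin n))))
    rw [h0] at h1
    exact absurd (le_antisymm h1 zero_le) (Metric.measure_ball_pos volume p hρ).ne'
  have hqk : ∀ k : ℕ, ∃ q, q ∈ Metric.ball p (min r (((k:ℝ)+1)⁻¹)) ∧
      (∀ᵐ t : ℝ, q + t • w ∉ S) :=
    fun k => hgoodball _ (lt_min hr (by positivity))
  choose qk hqk1 hqk2 using hqk
  have hqk_cb : ∀ k, qk k ∈ Metric.closedBall p r := fun k =>
    Metric.ball_subset_closedBall ((Metric.ball_subset_ball (min_le_left _ _)) (hqk1 k))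
  have hinvtend : Tendsto (fun k : ℕ => ((k:ℝ)+1)⁻¹) atTop (𝓝 0) :=
    tendsto_one_div_add_atTop_nhds_zero_nat.congr (fun k => by rw [one_div])
  have hqk_tendsto : Tendsto qk atTop (𝓝 p) := by
    rw [tendsto_iff_dist_tendsto_zero]
    refine squeeze_zero (fun k => dist_nonneg) (fun k => ?_) hinvtend
    exact le_of_lt (lt_of_lt_of_le (Metric.mem_ball.1 (hqk1 k)) (min_le_right _ _))
  have hp_ineq : ∀ t ∈ Ioc (0:ℝ) T, f (p + t • w) - f p ≤ c * t := by
    intro t ht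
    have hterm : ∀ k, f (qk k + t • w) - f (qk k) ≤ c * t := fun k =>
      hq_ineq (qk k) (hqk_cb k) (hqk2 k) t ht
    have hcont := hf.continuous
    have htend : Tendsto (fun k => f (qk k + t • w) - f (qk k)) atTop
        (𝓝 (f (p + t • w) - f p)) := by
      have h1 : Tendsto (fun k => qk k + t • w) atTop (𝓝 (p + t • w)) :=
        hqk_tendsto.add tendsto_const_nhds
      exact ((hcont.tendsto _).comp h1).sub ((hcont.tendsto _).comp hqk_tendsto)
    exact le_of_tendsto htend (Eventually.of_forall hterm)
  -- derivative at p along w exceeds c : contradiction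
  have hlinep : HasDerivAt (fun t : ℝ => f (p + t • w)) (ψ (gradient f p)) 0 := by
    have := lineDeriv p 0 (by simpa using hp)
    simpa using this
  set tk : ℕ → ℝ := fun k => min T (((k:ℝ)+1)⁻¹) with htkdef
  have htkpos : ∀ k, 0 < tk k := fun k => lt_min hT (by positivity)
  have htkmem : ∀ k, tk k ∈ Ioc (0:ℝ) T := fun k => ⟨htkpos k, min_le_left _ _⟩
  have htk0 : Tendsto tk atTop (𝓝 0) :=
    squeeze_zero (fun k => (htkpos k).le) (fun k => min_le_right _ _) hinvtend
  have hseq : Tendsto tk atTop (𝓝[≠] (0:ℝ)) :=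
    tendsto_nhdsWithin_iff.2 ⟨htk0, Eventually.of_forall fun k => (htkpos k).ne'⟩
  have hslope := (hasDerivAt_iff_tendsto_slope.1 hlinep).comp hseq
  have hle : ∀ k, (slope (fun t : ℝ => f (p + t • w)) 0 ∘ tk) k ≤ c := by
    intro k
    simp only [Function.comp_apply]
    rw [slope_def_field]
    have h := hp_ineq (tk k) (htkmem k)
    rw [sub_zero]
    have h0 : f (p + (0:ℝ) • w) = f p := by simp
    rw [h0, div_le_iff₀ (htkpos k)]
    linarith [h]
  have hfin := le_of_tendsto hslope (Eventually.of_forall hle)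
  linarith

noncomputable def clarkeSubdiff {n : ℕ} (f : EuclideanSpace ℝ (Fin n) → ℝ)
    (x : EuclideanSpace ℝ (Fin n)) : Set (EuclideanSpace ℝ (Fin n)) :=
  convexHull ℝ { v | ∃ y : ℕ → EuclideanSpace ℝ (Fin n),
    Tendsto y atTop (nhds x) ∧ (∀ j, DifferentiableAt ℝ f (y j)) ∧
    Tendsto (fun j => gradient f (y j)) atTop (nhds v) }

noncomputable def clarkeEpsSubdiff {n : ℕ} (f : EuclideanSpace ℝ (Fin n) → ℝ) (ε : ℝ)
    (x : EuclideanSpace ℝ (Fin n)) : Set (EuclideanSpace ℝ (Fin n)) :=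
  convexHull ℝ (⋃ y ∈ Metric.closedBall x ε, clarkeSubdiff f y)

theorem clarke_eps_subset_cl_conv_grad {n : ℕ} (f : EuclideanSpace ℝ (Fin n) → ℝ)
    (hf : LocallyLipschitz f) (D : Set (EuclideanSpace ℝ (Fin n)))
    (hD : volume Dᶜ = 0) (hdiff : ∀ y ∈ D, DifferentiableAt ℝ f y)
    (ε₁ ε₂ : ℝ) (h0 : 0 ≤ ε₁) (h12 : ε₁ < ε₂) (x : EuclideanSpace ℝ (Fin n)) :
    clarkeEpsSubdiff f ε₁ x ⊆
      closure (convexHull ℝ (gradient f '' (Metric.closedBall x ε₂ ∩ D))) := by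
  set C : Set (EuclideanSpace ℝ (Fin n)) :=
    closure (convexHull ℝ (gradient f '' (Metric.closedBall x ε₂ ∩ D))) with hCdef
  have hCconv : Convex ℝ C := (convex_convexHull ℝ _).closure
  have hCclosed : IsClosed C := isClosed_closure
  rw [clarkeEpsSubdiff]
  refine convexHull_min ?_ hCconv
  refine Set.iUnion₂_subset fun y hy => ?_
  rw [clarkeSubdiff]
  refine convexHull_min ?_ hCconv
  rintro v ⟨ys, hys, hysd, hysg⟩
  set δ : ℝ := (ε₂ - ε₁) / 2 with hδdef
  have hδ : 0 < δ := by rw [hδdef]; linarith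
  have hev : ∀ᶠ j in atTop, ys j ∈ Metric.closedBall y δ :=
    hys (Metric.closedBall_mem_nhds y hδ)
  refine hCclosed.mem_of_tendsto hysg ?_
  filter_upwards [hev] with j hj
  have hsub : Metric.closedBall (ys j) δ ⊆ Metric.closedBall x ε₂ := by
    apply Metric.closedBall_subset_closedBall'
    have h1 : dist (ys j) x ≤ dist (ys j) y + dist y x := dist_triangle _ _ _
    have h2 : dist (ys j) y ≤ δ := Metric.mem_closedBall.1 hj
    have h3 : dist y x ≤ ε₁ := Metric.mem_closedBall.1 hy
    rw [hδdef] at h2 ⊢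
    linarith
  have hmem := gradMem hf hD hdiff hδ (hysd j)
  refine closure_mono (convexHull_mono (Set.image_mono ?_)) hmem
  exact Set.inter_subset_inter_left _ hsub
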